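/- Every no-signaling box P(ab|xy) with binary inputs and outputs whose CHSH value I(P) = Σ_{abxy}(−1)^{a+b+xy}P(ab|xy) satisfies |I(P)| > 2 is not a local box, i.e., cannot be written as a convex combination of products of local strategies. -/
import Mathlib


open scoped BigOperators

noncomputable section

/-- A bipartite box with binary inputs and outputs: `P a b x y` is the probability
of outputs `(a, b)` given inputs `(x, y)`. -/
abbrev Box := Fin 2 → Fin 2 → Fin 2 → Fin 2 → ℝ

/-- A no-signaling box: nonnegative, normalized, and no-signaling in both
directions. -/
def IsNSBox (P : Box) : Prop :=
  (∀ a b x y, 0 ≤ P a b x y) ∧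
  (∀ x y, ∑ a, ∑ b, P a b x y = 1) ∧
  (∀ a x y y', ∑ b, P a b x y = ∑ b, P a b x y') ∧
  (∀ b x x' y, ∑ a, P a b x y = ∑ a, P a b x' y)

/-- A local (LOSR-free) box: a convex combination of products of local (stochastic)
strategies. -/
def IsLocalBox (P : Box) : Prop :=
  ∃ (k : ℕ) (q : Fin k → ℝ) (PA PB : Fin k → Fin 2 → Fin 2 → ℝ),
    (∀ i, 0 ≤ q i) ∧ (∑ i, q i = 1) ∧
    (∀ i a x, 0 ≤ PA i a x) ∧ (∀ i x, ∑ a, PA i a x = 1) ∧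
    (∀ i b y, 0 ≤ PB i b y) ∧ (∀ i y, ∑ b, PB i b y = 1) ∧
    ∀ a b x y, P a b x y = ∑ i, q i * PA i a x * PB i b y

/-- The CHSH functional. -/
def chsh (P : Box) : ℝ :=
  ∑ a, ∑ b, ∑ x, ∑ y, (-1 : ℝ) ^ (a.val + b.val + x.val * y.val) * P a b x y

/-- The Tsirelson box. -/
def PTsi : Box := fun a b x y =>
  (1 + (-1 : ℝ) ^ (a.val + b.val + x.val * y.val) / Real.sqrt 2) / 4

/-- CHSH of a local box as a convex combination of correlator expressions. -/
lemma chsh_local (k : ℕ) (q : Fin k → ℝ) (PA PB : Fin k → Fin 2 → Fin 2 → ℝ) :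
    chsh (fun a b x y => ∑ i, q i * PA i a x * PB i b y) =
      ∑ i, q i * ((PA i 0 0 - PA i 1 0) * (PB i 0 0 - PB i 1 0)
        + (PA i 0 0 - PA i 1 0) * (PB i 0 1 - PB i 1 1)
        + (PA i 0 1 - PA i 1 1) * (PB i 0 0 - PB i 1 0)
        - (PA i 0 1 - PA i 1 1) * (PB i 0 1 - PB i 1 1)) := by
  simp only [chsh, Fin.sum_univ_two, Fin.val_zero, Fin.val_one, Nat.mul_zero, Nat.zero_mul,
    Nat.mul_one, Nat.add_zero, Nat.zero_add, pow_zero, pow_one, pow_succ, one_mul,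
    neg_mul, neg_neg, mul_sub, sub_mul, mul_add, add_mul, Finset.mul_sum,
    ← Finset.sum_add_distrib, ← Finset.sum_sub_distrib, ← Finset.sum_neg_distrib]
  apply Finset.sum_congr rfl
  intro i _
  ring

/-- The elementary CHSH bound for numbers in `[-1, 1]`. -/
lemma s_bound (A0 A1 B0 B1 : ℝ) (hA0 : |A0| ≤ 1) (hA1 : |A1| ≤ 1)
    (hB0 : |B0| ≤ 1) (hB1 : |B1| ≤ 1) :
    |A0 * B0 + A0 * B1 + A1 * B0 - A1 * B1| ≤ 2 := by
  rw [abs_le] at *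
  constructor <;> nlinarith [mul_nonneg (by linarith : (0:ℝ) ≤ 1 - A0) (by linarith : (0:ℝ) ≤ 1 - B0),
    mul_nonneg (by linarith : (0:ℝ) ≤ 1 + A0) (by linarith : (0:ℝ) ≤ 1 + B0),
    mul_nonneg (by linarith : (0:ℝ) ≤ 1 - A0) (by linarith : (0:ℝ) ≤ 1 + B0),
    mul_nonneg (by linarith : (0:ℝ) ≤ 1 + A0) (by linarith : (0:ℝ) ≤ 1 - B0),
    mul_nonneg (by linarith : (0:ℝ) ≤ 1 - A1) (by linarith : (0:ℝ) ≤ 1 - B1),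
    mul_nonneg (by linarith : (0:ℝ) ≤ 1 + A1) (by linarith : (0:ℝ) ≤ 1 + B1),
    mul_nonneg (by linarith : (0:ℝ) ≤ 1 - A1) (by linarith : (0:ℝ) ≤ 1 + B1),
    mul_nonneg (by linarith : (0:ℝ) ≤ 1 + A1) (by linarith : (0:ℝ) ≤ 1 - B1),
    mul_nonneg (by linarith : (0:ℝ) ≤ 1 - A0) (by linarith : (0:ℝ) ≤ 1 - B1),
    mul_nonneg (by linarith : (0:ℝ) ≤ 1 + A0) (by linarith : (0:ℝ) ≤ 1 + B1),
    mul_nonneg (by linarith : (0:ℝ) ≤ 1 - A1) (by linarith : (0:ℝ) ≤ 1 - B0),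
    mul_nonneg (by linarith : (0:ℝ) ≤ 1 + A1) (by linarith : (0:ℝ) ≤ 1 + B0)]

/-- Every local box satisfies the CHSH inequality `|I(P)| ≤ 2`. -/
lemma chsh_le_two_of_local (P : Box) (hloc : IsLocalBox P) : |chsh P| ≤ 2 := by
  obtain ⟨k, q, PA, PB, hq0, hq1, hPA0, hPA1, hPB0, hPB1, hPeq⟩ := hloc
  have hPfun : P = fun a b x y => ∑ i, q i * PA i a x * PB i b y := by
    funext a b x y; exact hPeq a b x y
  rw [hPfun, chsh_local]
  calc |∑ i, q i * ((PA i 0 0 - PA i 1 0) * (PB i 0 0 - PB i 1 0)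
        + (PA i 0 0 - PA i 1 0) * (PB i 0 1 - PB i 1 1)
        + (PA i 0 1 - PA i 1 1) * (PB i 0 0 - PB i 1 0)
        - (PA i 0 1 - PA i 1 1) * (PB i 0 1 - PB i 1 1))|
      ≤ ∑ i, |q i * (_ : ℝ)| := Finset.abs_sum_le_sum_abs _ _
    _ ≤ ∑ i, q i * 2 := by
        apply Finset.sum_le_sum
        intro i _
        rw [abs_mul, abs_of_nonneg (hq0 i)]
        apply mul_le_mul_of_nonneg_left _ (hq0 i)
        have hA : ∀ x, |PA i 0 x - PA i 1 x| ≤ 1 := by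
          intro x
          have h1 := hPA1 i x
          simp [Fin.sum_univ_two] at h1
          have := hPA0 i 0 x; have := hPA0 i 1 x
          rw [abs_le]; constructor <;> linarith
        have hB : ∀ y, |PB i 0 y - PB i 1 y| ≤ 1 := by
          intro y
          have h1 := hPB1 i y
          simp [Fin.sum_univ_two] at h1
          have := hPB0 i 0 y; have := hPB0 i 1 y
          rw [abs_le]; constructor <;> linarith
        exact s_bound _ _ _ _ (hA 0) (hA 1) (hB 0) (hB 1)
    _ = 2 := by rw [← Finset.sum_mul, hq1, one_mul]

/-- every no-signaling box whose CHSH value exceeds 2 in absolute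
value is not local. -/
theorem stmt6 (P : Box) (hP : IsNSBox P) (hI : |chsh P| > 2) : ¬ IsLocalBox P := by
  intro hloc
  exact absurd (chsh_le_two_of_local P hloc) (not_le.mpr hI)
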